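/- arXiv:2501.13873 — 2 statements merged into one kernel-verified Lean document; each statement's English description precedes it below -/
import Mathlib

section
/- Let P be a convex polygon in ℝ² (a compact convex set with nonempty interior that is the convex hull of finitely many points, having at least one edge). Then the width of P is attained in a direction normal to one of its edges: there exists an edge of P with outer unit normal u such that width(P) = width_u(P). -/
open Metric Set
open scoped RealInnerProductSpace

/-- The directional width of a set `K` in direction `v`. -/
noncomputable def dirWidth (v : EuclideanSpace ℝ (Fin 2))
    (K : Set (EuclideanSpace ℝ (Fin 2))) : ℝ :=
  sSup ((fun x => ⟪v, x⟫) '' K) - sInf ((fun x => ⟪v, x⟫) '' K)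

/-- The width of `K`: the minimum directional width over all unit directions. -/
noncomputable def setWidth (K : Set (EuclideanSpace ℝ (Fin 2))) : ℝ :=
  sInf {w | ∃ v : EuclideanSpace ℝ (Fin 2), ‖v‖ = 1 ∧ w = dirWidth v K}

/-- The face of `P` in outer normal direction `u`: the set of points of `P` maximizing
the linear functional `x ↦ ⟪u, x⟫`. -/
noncomputable def normalFace (P : Set (EuclideanSpace ℝ (Fin 2)))
    (u : EuclideanSpace ℝ (Fin 2)) : Set (EuclideanSpace ℝ (Fin 2)) :=
  {x ∈ P | ⟪u, x⟫ = sSup ((fun y => ⟪u, y⟫) '' P)}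

/-- `u` is the outer unit normal of an edge (one-dimensional face) of `P`. -/
def IsEdgeNormal (P : Set (EuclideanSpace ℝ (Fin 2)))
    (u : EuclideanSpace ℝ (Fin 2)) : Prop :=
  ‖u‖ = 1 ∧ Module.finrank ℝ (vectorSpan ℝ (normalFace P u)) = 1

section Aux

variable {P : Set (EuclideanSpace ℝ (Fin 2))} {V : Finset (EuclideanSpace ℝ (Fin 2))}

private lemma inner_isLinearMap (v : EuclideanSpace ℝ (Fin 2)) :
    IsLinearMap ℝ (fun x : EuclideanSpace ℝ (Fin 2) => ⟪v, x⟫) :=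
  ⟨fun a b => inner_add_right v a b, fun c a => real_inner_smul_right v a c⟩

private lemma isGreatest_aux (hP : P = convexHull ℝ (V : Set (EuclideanSpace ℝ (Fin 2))))
    (hV : V.Nonempty) (v : EuclideanSpace ℝ (Fin 2)) :
    IsGreatest ((fun x => ⟪v, x⟫) '' P) (V.sup' hV fun x => ⟪v, x⟫) := by
  obtain ⟨p, hpV, hp⟩ := Finset.exists_mem_eq_sup' hV (fun x => ⟪v, x⟫)
  have hVP : (V : Set (EuclideanSpace ℝ (Fin 2))) ⊆ P := by
    rw [hP]; exact subset_convexHull ℝ _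
  constructor
  · exact ⟨p, hVP hpV, hp.symm⟩
  · rintro _ ⟨x, hx, rfl⟩
    rw [hP] at hx
    have hsub : (V : Set (EuclideanSpace ℝ (Fin 2))) ⊆
        {y | ⟪v, y⟫ ≤ V.sup' hV fun x => ⟪v, x⟫} := fun y hy => Finset.le_sup' (fun x => ⟪v, x⟫) hy
    exact convexHull_min hsub (convex_halfSpace_le (inner_isLinearMap v) _) hx

private lemma isLeast_aux (hP : P = convexHull ℝ (V : Set (EuclideanSpace ℝ (Fin 2))))
    (hV : V.Nonempty) (v : EuclideanSpace ℝ (Fin 2)) :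
    IsLeast ((fun x => ⟪v, x⟫) '' P) (V.inf' hV fun x => ⟪v, x⟫) := by
  obtain ⟨p, hpV, hp⟩ := Finset.exists_mem_eq_inf' hV (fun x => ⟪v, x⟫)
  have hVP : (V : Set (EuclideanSpace ℝ (Fin 2))) ⊆ P := by
    rw [hP]; exact subset_convexHull ℝ _
  constructor
  · exact ⟨p, hVP hpV, hp.symm⟩
  · rintro _ ⟨x, hx, rfl⟩
    rw [hP] at hx
    have hsub : (V : Set (EuclideanSpace ℝ (Fin 2))) ⊆
        {y | V.inf' hV (fun x => ⟪v, x⟫) ≤ ⟪v, y⟫} := fun y hy => Finset.inf'_le (fun x => ⟪v, x⟫) hy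
    exact convexHull_min hsub (convex_halfSpace_ge (inner_isLinearMap v) _) hx

private lemma dirWidth_eq (hP : P = convexHull ℝ (V : Set (EuclideanSpace ℝ (Fin 2))))
    (hV : V.Nonempty) (v : EuclideanSpace ℝ (Fin 2)) :
    dirWidth v P = (V.sup' hV fun x => ⟪v, x⟫) - (V.inf' hV fun x => ⟪v, x⟫) := by
  rw [dirWidth, (isGreatest_aux hP hV v).csSup_eq, (isLeast_aux hP hV v).csInf_eq]

private lemma normalFace_eq (hP : P = convexHull ℝ (V : Set (EuclideanSpace ℝ (Fin 2))))
    (hV : V.Nonempty) (v : EuclideanSpace ℝ (Fin 2)) :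
    normalFace P v = {x ∈ P | ⟪v, x⟫ = V.sup' hV fun x => ⟪v, x⟫} := by
  unfold normalFace
  rw [(isGreatest_aux hP hV v).csSup_eq]

private lemma sup'_neg_aux (hV : V.Nonempty) (v : EuclideanSpace ℝ (Fin 2)) :
    (V.sup' hV fun x => ⟪-v, x⟫) = -(V.inf' hV fun x => ⟪v, x⟫) := by
  apply le_antisymm
  · apply Finset.sup'_le
    intro b hb
    rw [inner_neg_left]
    exact neg_le_neg (Finset.inf'_le _ hb)
  · obtain ⟨i, hi, hEq⟩ := Finset.exists_mem_eq_inf' hV (fun x => ⟪v, x⟫)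
    rw [hEq]
    simpa only [inner_neg_left] using Finset.le_sup' (fun x => ⟪-v, x⟫) hi

private lemma inf'_neg_aux (hV : V.Nonempty) (v : EuclideanSpace ℝ (Fin 2)) :
    (V.inf' hV fun x => ⟪-v, x⟫) = -(V.sup' hV fun x => ⟪v, x⟫) := by
  apply le_antisymm
  · obtain ⟨i, hi, hEq⟩ := Finset.exists_mem_eq_sup' hV (fun x => ⟪v, x⟫)
    rw [hEq]
    simpa only [inner_neg_left] using Finset.inf'_le (fun x => ⟪-v, x⟫) hi
  · apply Finset.le_inf'
    intro b hb
    rw [inner_neg_left]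
    exact neg_le_neg (Finset.le_sup' _ hb)

private lemma dirWidth_neg (hP : P = convexHull ℝ (V : Set (EuclideanSpace ℝ (Fin 2))))
    (hV : V.Nonempty) (v : EuclideanSpace ℝ (Fin 2)) :
    dirWidth (-v) P = dirWidth v P := by
  rw [dirWidth_eq hP hV, dirWidth_eq hP hV, sup'_neg_aux hV, inf'_neg_aux hV]
  ring

private lemma dirWidth_pos (hP : P = convexHull ℝ (V : Set (EuclideanSpace ℝ (Fin 2))))
    (hV : V.Nonempty) (hint : (interior P).Nonempty) {v : EuclideanSpace ℝ (Fin 2)}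
    (hv : ‖v‖ = 1) : 0 < dirWidth v P := by
  obtain ⟨c, hc⟩ := hint
  rw [mem_interior_iff_mem_nhds] at hc
  obtain ⟨ε, hε, hball⟩ := Metric.mem_nhds_iff.mp hc
  have hmem : ∀ t : ℝ, |t| < ε → c + t • v ∈ P := by
    intro t ht
    apply hball
    rw [mem_ball, dist_eq_norm]
    have : c + t • v - c = t • v := by abel
    rw [this, norm_smul, hv]
    simpa using ht
  have h1 : c + (ε/2) • v ∈ P := hmem _ (by rw [abs_of_pos (by linarith)]; linarith)
  have h2 : c + (-(ε/2)) • v ∈ P := hmem _ (by rw [abs_of_neg (by linarith)]; linarith)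
  have hub := (isGreatest_aux hP hV v).isLUB.1
  have hlb := (isLeast_aux hP hV v).isGLB.1
  have hs1 : ⟪v, c + (ε/2) • v⟫ ≤ sSup ((fun x => ⟪v, x⟫) '' P) := by
    apply le_csSup ((isGreatest_aux hP hV v).bddAbove)
    exact ⟨_, h1, rfl⟩
  have hs2 : sInf ((fun x => ⟪v, x⟫) '' P) ≤ ⟪v, c + (-(ε/2)) • v⟫ := by
    apply csInf_le ((isLeast_aux hP hV v).bddBelow)
    exact ⟨_, h2, rfl⟩
  have hvv : ⟪v, v⟫ = 1 := by
    rw [real_inner_self_eq_norm_sq, hv]; norm_num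
  have hcalc : ⟪v, c + (ε/2) • v⟫ - ⟪v, c + (-(ε/2)) • v⟫ = ε := by
    rw [inner_add_right, inner_add_right, real_inner_smul_right, real_inner_smul_right, hvv]
    ring
  rw [dirWidth]
  linarith

private lemma face_subsingleton {u : EuclideanSpace ℝ (Fin 2)} (hu : u ≠ 0)
    (h : Module.finrank ℝ (vectorSpan ℝ (normalFace P u)) ≠ 1) :
    (normalFace P u).Subsingleton := by
  by_contra h'
  obtain ⟨x, hx, y, hy, hxy⟩ := Set.not_subsingleton_iff.mp h'
  apply h
  have hle : vectorSpan ℝ (normalFace P u) ≤ (ℝ ∙ u)ᗮ := by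
    rw [vectorSpan_def]
    apply Submodule.span_le.mpr
    rintro z hz
    obtain ⟨a, ha, b, hb, rfl⟩ := hz
    rw [SetLike.mem_coe, Submodule.mem_orthogonal_singleton_iff_inner_right]
    show ⟪u, a - b⟫ = 0
    rw [inner_sub_right, ha.2, hb.2, sub_self]
  have hperp : Module.finrank ℝ ((ℝ ∙ u)ᗮ : Submodule ℝ (EuclideanSpace ℝ (Fin 2))) = 1 := by
    have h1 := Submodule.finrank_add_finrank_orthogonal (K := (ℝ ∙ u))
    rw [finrank_span_singleton hu, finrank_euclideanSpace_fin] at h1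
    omega
  have hle' : Module.finrank ℝ (vectorSpan ℝ (normalFace P u)) ≤ 1 :=
    hperp ▸ Submodule.finrank_mono hle
  have hge : 1 ≤ Module.finrank ℝ (vectorSpan ℝ (normalFace P u)) := by
    have hmem : x - y ∈ vectorSpan ℝ (normalFace P u) := vsub_mem_vectorSpan ℝ hx hy
    have hspan : (ℝ ∙ (x - y)) ≤ vectorSpan ℝ (normalFace P u) := by
      rw [Submodule.span_le, Set.singleton_subset_iff]; exact hmem
    calc 1 = Module.finrank ℝ (ℝ ∙ (x - y)) :=
            (finrank_span_singleton (sub_ne_zero.mpr hxy)).symm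
      _ ≤ _ := Submodule.finrank_mono hspan
  omega

end Aux

set_option maxHeartbeats 1000000 in
/-- For a convex polygon `P ⊆ ℝ²` (a compact convex set with nonempty interior that is the
convex hull of finitely many points and has at least one edge), the width of `P` is attained
in a direction normal to one of its edges. -/
theorem width_attained_at_edge_normal (P : Set (EuclideanSpace ℝ (Fin 2)))
    (hcomp : IsCompact P) (hconv : Convex ℝ P) (hint : (interior P).Nonempty)
    (V : Finset (EuclideanSpace ℝ (Fin 2))) (hP : P = convexHull ℝ (V : Set (EuclideanSpace ℝ (Fin 2))))
    (hedge : ∃ u, IsEdgeNormal P u) :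
    ∃ u, IsEdgeNormal P u ∧ setWidth P = dirWidth u P := by
  classical
  -- V is nonempty
  have hPne : P.Nonempty := hint.mono interior_subset
  have hV : V.Nonempty := by
    rw [← Finset.coe_nonempty, ← convexHull_nonempty_iff (𝕜 := ℝ), ← hP]; exact hPne
  -- continuity of directional width
  have hcont : Continuous (fun v => dirWidth v P) := by
    have heq : (fun v => dirWidth v P) =
        fun v => (V.sup' hV fun x => ⟪v, x⟫) - (V.inf' hV fun x => ⟪v, x⟫) :=
      funext fun v => dirWidth_eq hP hV v
    rw [heq]
    have hin : ∀ x : EuclideanSpace ℝ (Fin 2),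
        Continuous (fun v : EuclideanSpace ℝ (Fin 2) => ⟪v, x⟫) := by
      intro x
      exact continuous_inner.comp (continuous_id.prodMk continuous_const)
    exact (Continuous.finset_sup'_apply hV fun i _ => hin i).sub
      (Continuous.finset_inf'_apply hV fun i _ => hin i)
  -- minimizer on the sphere
  obtain ⟨e, he1, _⟩ := hedge
  have hsne : (sphere (0 : EuclideanSpace ℝ (Fin 2)) 1).Nonempty :=
    ⟨e, mem_sphere_zero_iff_norm.mpr he1⟩
  obtain ⟨u₀, hu₀s, hminOn⟩ := (isCompact_sphere (0 : EuclideanSpace ℝ (Fin 2)) 1).exists_isMinOn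
    hsne hcont.continuousOn
  have hu₀ : ‖u₀‖ = 1 := mem_sphere_zero_iff_norm.mp hu₀s
  have hu₀ne : u₀ ≠ 0 := fun h => by simp [h] at hu₀
  have hmin : ∀ v : EuclideanSpace ℝ (Fin 2), ‖v‖ = 1 → dirWidth u₀ P ≤ dirWidth v P :=
    fun v hv => hminOn (mem_sphere_zero_iff_norm.mpr hv)
  -- setWidth is attained at u₀
  have hwidth : setWidth P = dirWidth u₀ P := by
    rw [setWidth]
    apply le_antisymm
    · exact csInf_le ⟨0, by rintro w ⟨v, hv, rfl⟩; exact (dirWidth_pos hP hV hint hv).le⟩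
        ⟨u₀, hu₀, rfl⟩
    · exact le_csInf ⟨_, u₀, hu₀, rfl⟩ (by rintro w ⟨v, hv, rfl⟩; exact hmin v hv)
  by_cases hA : Module.finrank ℝ (vectorSpan ℝ (normalFace P u₀)) = 1
  · exact ⟨u₀, ⟨hu₀, hA⟩, hwidth⟩
  by_cases hB : Module.finrank ℝ (vectorSpan ℝ (normalFace P (-u₀))) = 1
  · exact ⟨-u₀, ⟨by rwa [norm_neg], hB⟩, hwidth.trans (dirWidth_neg hP hV u₀).symm⟩
  exfalso
  -- both faces are singletons
  have hsubA : (normalFace P u₀).Subsingleton := face_subsingleton hu₀ne hA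
  have hsubB : (normalFace P (-u₀)).Subsingleton :=
    face_subsingleton (by simpa using hu₀ne) hB
  obtain ⟨p, hpV, hpM⟩ := Finset.exists_mem_eq_sup' hV (fun x => ⟪u₀, x⟫)
  obtain ⟨q, hqV, hqm⟩ := Finset.exists_mem_eq_inf' hV (fun x => ⟪u₀, x⟫)
  have hVP : (V : Set (EuclideanSpace ℝ (Fin 2))) ⊆ P := by
    rw [hP]; exact subset_convexHull ℝ _
  have hpP : p ∈ P := hVP hpV
  have hqP : q ∈ P := hVP hqV
  have hpF : p ∈ normalFace P u₀ := by
    rw [normalFace_eq hP hV]; exact ⟨hpP, hpM.symm⟩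
  have hqF : q ∈ normalFace P (-u₀) := by
    rw [normalFace_eq hP hV, sup'_neg_aux hV]
    exact ⟨hqP, by rw [inner_neg_left, hqm]⟩
  -- strict inequalities at u₀ for non-face points of V
  have htop : ∀ x ∈ V, x ≠ p → ⟪u₀, x⟫ < ⟪u₀, p⟫ := by
    intro x hxV hxp
    rcases lt_or_eq_of_le (hpM ▸ Finset.le_sup' (fun x => ⟪u₀, x⟫) hxV) with h | h
    · exact h
    · exfalso
      apply hxp
      apply hsubA _ hpF
      rw [normalFace_eq hP hV]
      exact ⟨hVP hxV, by rw [h, hpM]⟩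
  have hbot : ∀ x ∈ V, x ≠ q → ⟪u₀, q⟫ < ⟪u₀, x⟫ := by
    intro x hxV hxq
    rcases lt_or_eq_of_le (hqm ▸ Finset.inf'_le (fun x => ⟪u₀, x⟫) hxV) with h | h
    · exact h
    · exfalso
      apply hxq
      apply hsubB _ hqF
      rw [normalFace_eq hP hV, sup'_neg_aux hV]
      exact ⟨hVP hxV, by rw [inner_neg_left, ← h, hqm]⟩
  -- perpendicular unit vector
  set w : EuclideanSpace ℝ (Fin 2) := !₂[-(u₀ 1), u₀ 0] with hwdef
  have hwu : ⟪u₀, w⟫ = 0 := by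
    simp [PiLp.inner_apply, Fin.sum_univ_two, RCLike.inner_apply, hwdef]
    ring
  have hww : ⟪w, w⟫ = ⟪u₀, u₀⟫ := by
    rw [hwdef]
    simp only [PiLp.inner_apply, Fin.sum_univ_two, RCLike.inner_apply, conj_trivial, PiLp.toLp_apply, Matrix.cons_val_zero, Matrix.cons_val_one, Matrix.head_cons]
    ring
  have hu₀u₀ : ⟪u₀, u₀⟫ = 1 := by rw [real_inner_self_eq_norm_sq, hu₀]; norm_num
  -- rotated direction
  set vt : ℝ → EuclideanSpace ℝ (Fin 2) :=
    fun t => Real.cos t • u₀ + Real.sin t • w with hvtdef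
  have hvt_inner : ∀ t y, ⟪vt t, y⟫ = Real.cos t * ⟪u₀, y⟫ + Real.sin t * ⟪w, y⟫ := by
    intro t y
    rw [hvtdef]
    simp [inner_add_left, real_inner_smul_left]
  have hvt_norm : ∀ t, ‖vt t‖ = 1 := by
    intro t
    have hsq : ⟪vt t, vt t⟫ = 1 := by
      rw [hvtdef]
      simp only [inner_add_left, inner_add_right, real_inner_smul_left, real_inner_smul_right]
      have hwu' : ⟪w, u₀⟫ = 0 := by rw [real_inner_comm]; exact hwu
      rw [hwu, hwu', hww, hu₀u₀]
      linear_combination Real.sin_sq_add_cos_sq t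
    have h1 : ‖vt t‖ ^ 2 = 1 := by rw [← real_inner_self_eq_norm_sq, hsq]
    have h2 := norm_nonneg (vt t)
    nlinarith
  have hvt0 : ∀ y, ⟪vt 0, y⟫ = ⟪u₀, y⟫ := by
    intro y; rw [hvt_inner]; simp
  have hcont' : ∀ y : EuclideanSpace ℝ (Fin 2), Continuous fun t => ⟪vt t, y⟫ := by
    intro y
    have : (fun t => ⟪vt t, y⟫) = fun t => Real.cos t * ⟪u₀, y⟫ + Real.sin t * ⟪w, y⟫ :=
      funext fun t => hvt_inner t y
    rw [this]
    exact (Real.continuous_cos.mul continuous_const).add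
      (Real.continuous_sin.mul continuous_const)
  -- eventually, p and q remain the unique maximizer/minimizer
  have hev : ∀ᶠ t in nhds (0 : ℝ),
      (∀ x ∈ V, x ≠ p → ⟪vt t, x⟫ < ⟪vt t, p⟫) ∧
      (∀ x ∈ V, x ≠ q → ⟪vt t, q⟫ < ⟪vt t, x⟫) := by
    apply Filter.Eventually.and
    · rw [Filter.eventually_all_finset]
      intro x hxV
      by_cases hxp : x = p
      · exact Filter.Eventually.of_forall fun t h => absurd hxp h
      · have hlt : ⟪vt 0, x⟫ < ⟪vt 0, p⟫ := by
          rw [hvt0, hvt0]; exact htop x hxV hxp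
        exact ((hcont' x).continuousAt.eventually_lt (hcont' p).continuousAt hlt).mono
          fun t h _ => h
    · rw [Filter.eventually_all_finset]
      intro x hxV
      by_cases hxq : x = q
      · exact Filter.Eventually.of_forall fun t h => absurd hxq h
      · have hlt : ⟪vt 0, q⟫ < ⟪vt 0, x⟫ := by
          rw [hvt0, hvt0]; exact hbot x hxV hxq
        exact ((hcont' q).continuousAt.eventually_lt (hcont' x).continuousAt hlt).mono
          fun t h _ => h
  obtain ⟨δ, hδ, hδall⟩ := Metric.eventually_nhds_iff.mp hev
  -- choose a small rotation of the appropriate sign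
  set A : ℝ := ⟪u₀, p - q⟫ with hAdef
  set B : ℝ := ⟪w, p - q⟫ with hBdef
  have hAw : dirWidth u₀ P = A := by
    rw [dirWidth_eq hP hV, hpM, hqm, hAdef, inner_sub_right]
  have hApos : 0 < A := hAw ▸ dirWidth_pos hP hV hint hu₀
  set s : ℝ := if 0 < B then -1 else 1 with hsdef
  set c : ℝ := min (δ / 2) 1 with hcdef
  have hc0 : 0 < c := lt_min (by linarith) one_pos
  have hc1 : c ≤ 1 := min_le_right _ _
  set t : ℝ := s * c with htdef
  have hst : |s| = 1 := by
    rw [hsdef]; split_ifs <;> simp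
  have htδ : dist t 0 < δ := by
    rw [Real.dist_eq, sub_zero, htdef, abs_mul, hst, one_mul,
      abs_of_pos hc0]
    calc c ≤ δ / 2 := min_le_left _ _
      _ < δ := by linarith
  obtain ⟨h1, h2⟩ := hδall htδ
  -- directional width at vt t
  have hsup : (V.sup' hV fun x => ⟪vt t, x⟫) = ⟪vt t, p⟫ := by
    apply le_antisymm
    · apply Finset.sup'_le
      intro x hxV
      by_cases hxp : x = p
      · rw [hxp]
      · exact (h1 x hxV hxp).le
    · exact Finset.le_sup' _ hpV
  have hinf : (V.inf' hV fun x => ⟪vt t, x⟫) = ⟪vt t, q⟫ := by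
    apply le_antisymm
    · exact Finset.inf'_le _ hqV
    · apply Finset.le_inf'
      intro x hxV
      by_cases hxq : x = q
      · rw [hxq]
      · exact (h2 x hxV hxq).le
  have hwt : dirWidth (vt t) P = Real.cos t * A + Real.sin t * B := by
    rw [dirWidth_eq hP hV, hsup, hinf, ← inner_sub_right, hvt_inner, hAdef, hBdef]
  -- show strict decrease
  have hcost : Real.cos t = Real.cos c := by
    rw [htdef, hsdef]; split_ifs <;> simp [Real.cos_neg]
  have hsint : Real.sin t = s * Real.sin c := by
    rw [htdef, hsdef]; split_ifs <;> simp [Real.sin_neg]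
  clear_value vt w A B s c t
  have hpi : (3 : ℝ) < Real.pi := Real.pi_gt_three
  have hcosc : Real.cos c < 1 := by
    rcases lt_or_eq_of_le (Real.cos_le_one c) with h | h
    · exact h
    · exfalso
      have h2 := (Real.cos_eq_one_iff_of_lt_of_lt (x := c)
        (by linarith) (by linarith)).mp h
      linarith
  have hsinc : 0 < Real.sin c := Real.sin_pos_of_pos_of_lt_pi hc0 (by linarith)
  have hsB : s * B ≤ 0 := by
    rw [hsdef]; split_ifs with hb
    · linarith
    · push_neg at hb; linarith
  have hlt : dirWidth (vt t) P < dirWidth u₀ P := by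
    rw [hwt, hAw, hcost, hsint]
    have h3 : (s * B) * Real.sin c ≤ 0 :=
      mul_nonpos_iff.mpr (Or.inr ⟨hsB, hsinc.le⟩)
    have h4 : Real.cos c * A < A := by nlinarith
    calc Real.cos c * A + s * Real.sin c * B
        = Real.cos c * A + (s * B) * Real.sin c := by ring
      _ ≤ Real.cos c * A := by linarith
      _ < A := h4
  exact absurd (hmin (vt t) (hvt_norm t)) (not_le.mpr hlt)
end

section
/- Let P = {x ∈ ℝ² : Ax ≤ b} be a convex polygon with nonempty interior, where every row A_i of A ∈ ℝ^{m×2} has unit norm and every row defines an edge of P, let n ≥ 2, let r = I(P), and for each i ∈ [m] let f_i(t) = width_{A_i}(interior_t(P)) − 2(n−1)t. Let ρ ∈ (0,r) be the unique number with width(P^ρ) = 2nρ. Then ρ = min { t ∈ (0,r) : f_i(t) = 0 for some i ∈ [m] }. -/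
open Metric Set
open scoped RealInnerProductSpace

/-- The inner parallel body of `P` at distance `t`. -/
def innerParallel (P : Set (EuclideanSpace ℝ (Fin 2))) (t : ℝ) :
    Set (EuclideanSpace ℝ (Fin 2)) :=
  {x ∈ P | closedBall x t ⊆ P}

/-- The `t`-rounded body `P^t`: the union of all closed `t`-balls contained in `P`. -/
def rounded (P : Set (EuclideanSpace ℝ (Fin 2))) (t : ℝ) :
    Set (EuclideanSpace ℝ (Fin 2)) :=
  {y | ∃ x, closedBall x t ⊆ P ∧ y ∈ closedBall x t}

/-- The inradius of `P`. -/
noncomputable def inradius (P : Set (EuclideanSpace ℝ (Fin 2))) : ℝ :=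
  sSup {r : ℝ | ∃ x, closedBall x r ⊆ P}

namespace RhoAux

lemma exists_eps {m : ℕ} (f : Fin m → ℝ) : ∃ ε : ℝ, 0 < ε ∧ ∀ j, 0 < f j → ε ≤ f j := by
  classical
  rcases (Finset.univ.filter (fun j => 0 < f j)).eq_empty_or_nonempty with h | h
  · refine ⟨1, one_pos, fun j hj => ?_⟩
    have hmem : j ∈ Finset.univ.filter (fun j => 0 < f j) :=
      Finset.mem_filter.mpr ⟨Finset.mem_univ j, hj⟩
    rw [h] at hmem
    exact absurd hmem (Finset.notMem_empty j)
  · obtain ⟨j₀, hj₀, hmin⟩ := Finset.exists_min_image _ f h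
    exact ⟨f j₀, (Finset.mem_filter.mp hj₀).2,
      fun j hj => hmin j (Finset.mem_filter.mpr ⟨Finset.mem_univ j, hj⟩)⟩

lemma eq_one_of_mul_self {r : ℝ} (h0 : 0 ≤ r) (h : r * r = 1) : r = 1 := by
  nlinarith [sq_nonneg (r - 1)]

lemma inner_coords (x y : EuclideanSpace ℝ (Fin 2)) : ⟪x, y⟫ = x 0 * y 0 + x 1 * y 1 := by
  rw [PiLp.inner_apply, Fin.sum_univ_two]
  simp [RCLike.inner_apply, conj_trivial]; ring

lemma sSup_neg_img (S : Set ℝ) (hne : S.Nonempty) (hb : BddBelow S) :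
    sSup ((fun y => -y) '' S) = -sInf S := by
  apply le_antisymm
  · apply csSup_le (hne.image _)
    rintro y ⟨x, hx, rfl⟩
    exact neg_le_neg (csInf_le hb hx)
  · obtain ⟨c, hc⟩ := hb
    have hba : BddAbove ((fun y => -y) '' S) := by
      refine ⟨-c, ?_⟩
      rintro y ⟨x, hx, rfl⟩
      exact neg_le_neg (hc hx)
    have h2 : -sSup ((fun y => -y) '' S) ≤ sInf S := by
      apply le_csInf hne
      intro x hx
      have := le_csSup hba (mem_image_of_mem _ hx)
      linarith
    linarith

lemma sInf_neg_img (S : Set ℝ) (hne : S.Nonempty) (hb : BddAbove S) :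
    sInf ((fun y => -y) '' S) = -sSup S := by
  apply le_antisymm
  · obtain ⟨c, hc⟩ := hb
    have hbb : BddBelow ((fun y => -y) '' S) := by
      refine ⟨-c, ?_⟩
      rintro y ⟨x, hx, rfl⟩
      exact neg_le_neg (hc hx)
    have h2 : sSup S ≤ -sInf ((fun y => -y) '' S) := by
      apply csSup_le hne
      intro x hx
      have := csInf_le hbb (mem_image_of_mem _ hx)
      linarith
    linarith
  · apply le_csInf (hne.image _)
    rintro y ⟨x, hx, rfl⟩
    exact neg_le_neg (le_csSup hb hx)

lemma poly_isClosed {m : ℕ} (A : Fin m → EuclideanSpace ℝ (Fin 2)) (c : Fin m → ℝ) :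
    IsClosed {x : EuclideanSpace ℝ (Fin 2) | ∀ j, ⟪A j, x⟫ ≤ c j} := by
  have h : {x : EuclideanSpace ℝ (Fin 2) | ∀ j, ⟪A j, x⟫ ≤ c j}
      = ⋂ j, {x : EuclideanSpace ℝ (Fin 2) | ⟪A j, x⟫ ≤ c j} := by
    ext x
    simp only [mem_setOf_eq, mem_iInter]
  rw [h]
  exact isClosed_iInter fun j =>
    isClosed_le (Continuous.inner continuous_const continuous_id) continuous_const

lemma active_of_max {m : ℕ} (A : Fin m → EuclideanSpace ℝ (Fin 2)) (c : Fin m → ℝ)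
    (hA : ∀ i, ‖A i‖ = 1) {v z : EuclideanSpace ℝ (Fin 2)} (hv : ‖v‖ = 1)
    (hz : z ∈ {x : EuclideanSpace ℝ (Fin 2) | ∀ j, ⟪A j, x⟫ ≤ c j})
    (hmax : ∀ x ∈ {x : EuclideanSpace ℝ (Fin 2) | ∀ j, ⟪A j, x⟫ ≤ c j}, ⟪v, x⟫ ≤ ⟪v, z⟫) :
    ∃ j, ⟪A j, z⟫ = c j := by
  by_contra hcon
  push_neg at hcon
  obtain ⟨ε, hε, hmineps⟩ := exists_eps (fun j => c j - ⟪A j, z⟫)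
  have hz' : z + ε • v ∈ {x : EuclideanSpace ℝ (Fin 2) | ∀ j, ⟪A j, x⟫ ≤ c j} := by
    intro j
    have h1 : ⟪A j, z + ε • v⟫ = ⟪A j, z⟫ + ε * ⟪A j, v⟫ := by
      rw [inner_add_right, real_inner_smul_right]
    have h2 : ⟪A j, v⟫ ≤ 1 := by
      have h := real_inner_le_norm (A j) v
      rw [hA j, hv] at h; linarith
    have h3 : 0 < c j - ⟪A j, z⟫ :=
      lt_of_le_of_ne (sub_nonneg.mpr (hz j)) (fun h => hcon j (by linarith))
    have h4 := hmineps j h3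
    have h5 : ε * ⟪A j, v⟫ ≤ ε := by nlinarith
    show ⟪A j, z + ε • v⟫ ≤ c j
    rw [h1]; linarith
  have h6 := hmax _ hz'
  rw [inner_add_right, real_inner_smul_right, real_inner_self_eq_norm_mul_norm, hv] at h6
  nlinarith

lemma max_stable {m : ℕ} (A : Fin m → EuclideanSpace ℝ (Fin 2)) (c : Fin m → ℝ)
    (hA : ∀ i, ‖A i‖ = 1) {v p : EuclideanSpace ℝ (Fin 2)}
    (hp : p ∈ {x : EuclideanSpace ℝ (Fin 2) | ∀ j, ⟪A j, x⟫ ≤ c j})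
    (hmax : ∀ x ∈ {x : EuclideanSpace ℝ (Fin 2) | ∀ j, ⟪A j, x⟫ ≤ c j}, ⟪v, x⟫ ≤ ⟪v, p⟫)
    (huniq : ∀ x ∈ {x : EuclideanSpace ℝ (Fin 2) | ∀ j, ⟪A j, x⟫ ≤ c j},
      ⟪v, x⟫ = ⟪v, p⟫ → x = p) :
    ∃ δ : ℝ, 0 < δ ∧ ∀ w : EuclideanSpace ℝ (Fin 2), ‖w - v‖ ≤ δ →
      ∀ x ∈ {x : EuclideanSpace ℝ (Fin 2) | ∀ j, ⟪A j, x⟫ ≤ c j}, ⟪w, x⟫ ≤ ⟪w, p⟫ := by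
  set K : Set (EuclideanSpace ℝ (Fin 2)) := {x | ∀ j, ⟪A j, x⟫ ≤ c j} with hK
  set C : Set (EuclideanSpace ℝ (Fin 2)) :=
    {d | ‖d‖ = 1 ∧ ∀ j, ⟪A j, p⟫ = c j → ⟪A j, d⟫ ≤ 0} with hC
  have hdirC : ∀ x ∈ K, x ≠ p → (‖x - p‖⁻¹ • (x - p)) ∈ C := by
    intro x hx hxp
    have hxp' : x - p ≠ 0 := sub_ne_zero.mpr hxp
    have hnorm : ‖x - p‖ ≠ 0 := norm_ne_zero_iff.mpr hxp'
    constructor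
    · rw [norm_smul, norm_inv, norm_norm]
      field_simp
    · intro j hact
      rw [real_inner_smul_right]
      have h1 : ⟪A j, x - p⟫ ≤ 0 := by
        rw [inner_sub_right, hact]
        have := hx j
        linarith
      have h2 : (0:ℝ) ≤ ‖x - p‖⁻¹ := inv_nonneg.mpr (norm_nonneg _)
      exact mul_nonpos_of_nonneg_of_nonpos h2 h1
  have hCneg : ∀ d ∈ C, ⟪v, d⟫ < 0 := by
    intro d hd
    obtain ⟨hd1, hd2⟩ := hd
    obtain ⟨ε, hε, hmineps⟩ := exists_eps (fun j => c j - ⟪A j, p⟫)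
    have hmem : p + ε • d ∈ K := by
      intro j
      show ⟪A j, p + ε • d⟫ ≤ c j
      rw [inner_add_right, real_inner_smul_right]
      rcases eq_or_lt_of_le (sub_nonneg.mpr (hp j) : (0:ℝ) ≤ c j - ⟪A j, p⟫) with h | h
      · have hact : ⟪A j, p⟫ = c j := by linarith
        have := hd2 j hact
        nlinarith
      · have h2 : ⟪A j, d⟫ ≤ 1 := by
          have h' := real_inner_le_norm (A j) d
          rw [hA j, hd1] at h'; linarith
        have h3 := hmineps j h
        nlinarith
    have hle : ⟪v, d⟫ ≤ 0 := by
      have h := hmax _ hmem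
      rw [inner_add_right, real_inner_smul_right] at h
      nlinarith
    rcases lt_or_eq_of_le hle with h | h
    · exact h
    · exfalso
      have heq : ⟪v, p + ε • d⟫ = ⟪v, p⟫ := by
        rw [inner_add_right, real_inner_smul_right, h]; ring
      have h7 := huniq _ hmem heq
      have h8 : ε • d = 0 := by
        have := congrArg (fun y => y - p) h7
        simpa [add_sub_cancel_left] using this
      have h9 : d = 0 := by
        rcases smul_eq_zero.mp h8 with h' | h'
        · exact absurd h' (ne_of_gt hε)
        · exact h'
      rw [h9] at hd1
      simp at hd1
  have hCclosed : IsClosed C := by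
    have h1 : C = {d : EuclideanSpace ℝ (Fin 2) | ‖d‖ = 1} ∩
        ⋂ j, {d : EuclideanSpace ℝ (Fin 2) | ⟪A j, p⟫ = c j → ⟪A j, d⟫ ≤ 0} := by
      ext d
      simp only [hC, mem_setOf_eq, mem_inter_iff, mem_iInter]
    rw [h1]
    refine IsClosed.inter (isClosed_eq continuous_norm continuous_const)
      (isClosed_iInter fun j => ?_)
    by_cases hact : ⟪A j, p⟫ = c j
    · have h2 : {d : EuclideanSpace ℝ (Fin 2) | ⟪A j, p⟫ = c j → ⟪A j, d⟫ ≤ 0}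
          = {d : EuclideanSpace ℝ (Fin 2) | ⟪A j, d⟫ ≤ 0} := by
        ext d
        simp only [mem_setOf_eq]
        exact ⟨fun h => h hact, fun h _ => h⟩
      rw [h2]
      exact isClosed_le (Continuous.inner continuous_const continuous_id) continuous_const
    · have h2 : {d : EuclideanSpace ℝ (Fin 2) | ⟪A j, p⟫ = c j → ⟪A j, d⟫ ≤ 0} = univ := by
        ext d
        simp only [mem_setOf_eq, mem_univ, iff_true]
        intro h
        exact absurd h hact
      rw [h2]
      exact isClosed_univ
  have hCsub : C ⊆ sphere (0 : EuclideanSpace ℝ (Fin 2)) 1 := by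
    intro d hd
    simp only [mem_sphere, dist_zero_right]
    exact hd.1
  have hCcpt : IsCompact C := (isCompact_sphere 0 1).of_isClosed_subset hCclosed hCsub
  rcases C.eq_empty_or_nonempty with hCe | hCne
  · refine ⟨1, one_pos, fun w _ x hx => ?_⟩
    rcases eq_or_ne x p with rfl | hxp
    · exact le_refl _
    · exact absurd (hdirC x hx hxp) (by rw [hCe]; exact notMem_empty _)
  · obtain ⟨d₀, hd₀C, hd₀max⟩ := hCcpt.exists_isMaxOn hCne
      (Continuous.continuousOn (Continuous.inner continuous_const continuous_id)
        : ContinuousOn (fun d => ⟪v, d⟫) C)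
    have hneg : ⟪v, d₀⟫ < 0 := hCneg d₀ hd₀C
    refine ⟨-⟪v, d₀⟫ / 2, by linarith, fun w hw x hx => ?_⟩
    rcases eq_or_ne x p with rfl | hxp
    · exact le_refl _
    · have hdC := hdirC x hx hxp
      set d : EuclideanSpace ℝ (Fin 2) := ‖x - p‖⁻¹ • (x - p) with hd
      have h1 : ⟪v, d⟫ ≤ ⟪v, d₀⟫ := hd₀max hdC
      have h2 : ⟪w - v, d⟫ ≤ ‖w - v‖ := by
        have h := real_inner_le_norm (w - v) d
        rw [hdC.1] at h
        linarith
      have h3 : ⟪w, d⟫ < 0 := by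
        have hsum : ⟪w, d⟫ = ⟪v, d⟫ + ⟪w - v, d⟫ := by
          rw [← inner_add_left]
          congr 1
          abel
        rw [hsum]
        linarith
      have hxp' : x - p ≠ 0 := sub_ne_zero.mpr hxp
      have hnormpos : 0 < ‖x - p‖ := norm_pos_iff.mpr hxp'
      have h4 : ⟪w, x - p⟫ = ‖x - p‖ * ⟪w, d⟫ := by
        rw [hd, real_inner_smul_right]
        field_simp
      have h5 : ⟪w, x - p⟫ < 0 := by
        rw [h4]
        exact mul_neg_of_pos_of_neg hnormpos h3
      rw [inner_sub_right] at h5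
      linarith

lemma eq_or_neg_of_orthogonal {a bb d : EuclideanSpace ℝ (Fin 2)}
    (ha : ‖a‖ = 1) (hb : ‖bb‖ = 1) (hd : d ≠ 0)
    (had : ⟪a, d⟫ = 0) (hbd : ⟪bb, d⟫ = 0) : a = bb ∨ a = -bb := by
  have ha2 : a 0 ^ 2 + a 1 ^ 2 = 1 := by
    have h := real_inner_self_eq_norm_mul_norm a
    rw [ha, inner_coords] at h
    nlinarith
  have hb2 : bb 0 ^ 2 + bb 1 ^ 2 = 1 := by
    have h := real_inner_self_eq_norm_mul_norm bb
    rw [hb, inner_coords] at h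
    nlinarith
  have hdd : d 0 ^ 2 + d 1 ^ 2 ≠ 0 := by
    intro h
    apply hd
    have h0 : ⟪d, d⟫ = 0 := by rw [inner_coords]; nlinarith
    exact inner_self_eq_zero.mp h0
  rw [inner_coords] at had hbd
  have hdet : a 0 * bb 1 - a 1 * bb 0 = 0 := by
    have h1 : (a 0 * bb 1 - a 1 * bb 0) * d 0 = 0 := by linear_combination bb 1 * had - a 1 * hbd
    have h2 : (a 0 * bb 1 - a 1 * bb 0) * d 1 = 0 := by linear_combination a 0 * hbd - bb 0 * had
    rcases eq_or_ne (d 0) 0 with h | h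
    · have hd1 : d 1 ≠ 0 := by
        intro h'
        apply hdd
        rw [h, h']; ring
      exact (mul_eq_zero.mp h2).resolve_right hd1
    · exact (mul_eq_zero.mp h1).resolve_right h
  have hip : ⟪a, bb⟫ ^ 2 = 1 := by
    rw [inner_coords]
    linear_combination (bb 0 ^ 2 + bb 1 ^ 2) * ha2 + hb2 - (a 0 * bb 1 - a 1 * bb 0) * hdet
  have hfac : (⟪a, bb⟫ - 1) * (⟪a, bb⟫ + 1) = 0 := by linear_combination hip
  rcases mul_eq_zero.mp hfac with h | h
  · left
    exact (inner_eq_one_iff_of_norm_eq_one (𝕜 := ℝ) ha hb).mp (by linarith)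
  · right
    have hnb : ‖-bb‖ = 1 := by rw [norm_neg]; exact hb
    have hib : ⟪a, -bb⟫ = 1 := by rw [inner_neg_right]; linarith
    exact (inner_eq_one_iff_of_norm_eq_one (𝕜 := ℝ) ha hnb).mp hib

end RhoAux

set_option maxHeartbeats 2000000 in
/-- For a convex polygon `P = {x : Ax ≤ b} ⊆ ℝ²` with nonempty interior, unit-norm rows and
every row defining an edge of `P`, with `n ≥ 2`, `r = I(P)` and
`f_i(t) = width_{A_i}(interior_t P) − 2(n−1)t`, the unique `ρ ∈ (0,r)` with
`width (P^ρ) = 2nρ` is the minimum of `{t ∈ (0,r) : f_i(t) = 0 for some i}`. -/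
theorem rho_eq_min_root {m : ℕ}
    (A : Fin m → EuclideanSpace ℝ (Fin 2)) (b : Fin m → ℝ)
    (hA : ∀ i, ‖A i‖ = 1)
    (hbdd : Bornology.IsBounded {x | ∀ i, ⟪A i, x⟫ ≤ b i})
    (hint : (interior {x | ∀ i, ⟪A i, x⟫ ≤ b i}).Nonempty)
    (hedge : ∀ i, Module.finrank ℝ
      (vectorSpan ℝ {x ∈ {x | ∀ j, ⟪A j, x⟫ ≤ b j} | ⟪A i, x⟫ = b i}) = 1)
    (n : ℕ) (hn : 2 ≤ n)
    (ρ : ℝ) (hρ₀ : 0 < ρ) (hρr : ρ < inradius {x | ∀ j, ⟪A j, x⟫ ≤ b j})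
    (hρ : setWidth (rounded {x | ∀ j, ⟪A j, x⟫ ≤ b j} ρ) = 2 * n * ρ) :
    IsLeast
      {t : ℝ | 0 < t ∧ t < inradius {x | ∀ j, ⟪A j, x⟫ ≤ b j} ∧
        ∃ i : Fin m,
          dirWidth (A i) (innerParallel {x | ∀ j, ⟪A j, x⟫ ≤ b j} t)
            - 2 * ((n : ℝ) - 1) * t = 0}
      ρ := by
  classical
  set Pb : Set (EuclideanSpace ℝ (Fin 2)) := {x | ∀ j, ⟪A j, x⟫ ≤ b j} with hPbdef
  set Q : ℝ → Set (EuclideanSpace ℝ (Fin 2)) :=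
    fun t => {x | ∀ j, ⟪A j, x⟫ ≤ b j - t} with hQdef
  have hwdef : ∀ (v : EuclideanSpace ℝ (Fin 2)) (K : Set (EuclideanSpace ℝ (Fin 2))),
      dirWidth v K = sSup ((fun x => ⟪v, x⟫) '' K) - sInf ((fun x => ⟪v, x⟫) '' K) :=
    fun _ _ => rfl
  have hswdef : ∀ K : Set (EuclideanSpace ℝ (Fin 2)), setWidth K
      = sInf {w | ∃ v : EuclideanSpace ℝ (Fin 2), ‖v‖ = 1 ∧ w = dirWidth v K} :=
    fun _ => rfl
  -- bound on P
  obtain ⟨R0, hR0⟩ := isBounded_iff_forall_norm_le.mp hbdd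
  set R : ℝ := max R0 0 with hRdef
  have hR0' : (0:ℝ) ≤ R := le_max_right _ _
  have hRnorm : ∀ x ∈ Pb, ‖x‖ ≤ R := fun x hx => le_trans (hR0 x hx) (le_max_left _ _)
  -- ball characterization
  have hball : ∀ t : ℝ, 0 ≤ t → ∀ x : EuclideanSpace ℝ (Fin 2),
      (closedBall x t ⊆ Pb ↔ x ∈ Q t) := by
    intro t ht x
    constructor
    · intro h j
      have hmem : x + t • A j ∈ closedBall x t := by
        rw [mem_closedBall, dist_eq_norm]
        simp only [add_sub_cancel_left]
        rw [norm_smul, hA j]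
        simp [abs_of_nonneg ht]
      have h2 := h hmem j
      rw [inner_add_right, real_inner_smul_right, real_inner_self_eq_norm_mul_norm, hA j] at h2
      show ⟪A j, x⟫ ≤ b j - t
      linarith only [h2]
    · intro hx y hy j
      have h1 : ⟪A j, y⟫ = ⟪A j, x⟫ + ⟪A j, y - x⟫ := by
        rw [← inner_add_right]; congr 1; abel
      have h2 : ⟪A j, y - x⟫ ≤ t := by
        have h := real_inner_le_norm (A j) (y - x)
        rw [hA j, one_mul] at h
        have h' : ‖y - x‖ ≤ t := by
          rw [← dist_eq_norm]
          exact mem_closedBall.mp hy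
        linarith
      have h3 : ⟪A j, x⟫ ≤ b j - t := hx j
      show ⟪A j, y⟫ ≤ b j
      rw [h1]
      linarith only [h2, h3]
  have hQsubP : ∀ t : ℝ, 0 ≤ t → Q t ⊆ Pb := by
    intro t ht x hx j
    have h1 : ⟪A j, x⟫ ≤ b j - t := hx j
    show ⟪A j, x⟫ ≤ b j
    linarith only [h1, ht]
  have hIP : ∀ t : ℝ, 0 ≤ t → innerParallel Pb t = Q t := by
    intro t ht
    ext x
    constructor
    · rintro ⟨hxP, hxball⟩
      exact (hball t ht x).mp hxball
    · intro hx
      exact ⟨hQsubP t ht hx, (hball t ht x).mpr hx⟩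
  -- a slightly larger inscribed ball
  have hSne : {r : ℝ | ∃ x, closedBall x r ⊆ Pb}.Nonempty := by
    refine ⟨-1, 0, ?_⟩
    rw [closedBall_eq_empty.mpr (by norm_num : (-1:ℝ) < 0)]
    exact empty_subset _
  have hρr2 : ρ < sSup {r : ℝ | ∃ x, closedBall x r ⊆ Pb} := hρr
  obtain ⟨r', hr'S, hρr'⟩ := exists_lt_of_lt_csSup hSne hρr2
  obtain ⟨x₀, hx₀ball⟩ := hr'S
  have hx₀Q : closedBall x₀ (r' - ρ) ⊆ Q ρ := by
    intro y hy
    refine (hball ρ hρ₀.le y).mp ?_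
    intro z hz
    apply hx₀ball
    rw [mem_closedBall] at hz hy ⊢
    calc dist z x₀ ≤ dist z y + dist y x₀ := dist_triangle z y x₀
    _ ≤ ρ + (r' - ρ) := add_le_add hz hy
    _ = r' := by ring
  have hx₀mem : x₀ ∈ Q ρ := hx₀Q (mem_closedBall_self (by linarith only [hρr']))
  have hQρne : (Q ρ).Nonempty := ⟨x₀, hx₀mem⟩
  have hQmono : ∀ s t : ℝ, s ≤ t → Q t ⊆ Q s := by
    intro s t hst x hx j
    have h1 : ⟪A j, x⟫ ≤ b j - t := hx j
    show ⟪A j, x⟫ ≤ b j - s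
    linarith only [h1, hst]
  have hQcpt : IsCompact (Q ρ) :=
    isCompact_of_isClosed_isBounded (RhoAux.poly_isClosed A _)
      (hbdd.subset (hQsubP ρ hρ₀.le))
  -- image bounds
  have hbddA : ∀ (v : EuclideanSpace ℝ (Fin 2)) (K : Set (EuclideanSpace ℝ (Fin 2))),
      K ⊆ Pb → BddAbove ((fun x => ⟪v, x⟫) '' K) := by
    intro v K hK
    refine ⟨‖v‖ * R, ?_⟩
    rintro y ⟨x, hx, rfl⟩
    have h1 := real_inner_le_norm v x
    have h2 := hRnorm x (hK hx)
    have h3 : ‖v‖ * ‖x‖ ≤ ‖v‖ * R := mul_le_mul_of_nonneg_left h2 (norm_nonneg v)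
    exact le_trans h1 h3
  have hbddB : ∀ (v : EuclideanSpace ℝ (Fin 2)) (K : Set (EuclideanSpace ℝ (Fin 2))),
      K ⊆ Pb → BddBelow ((fun x => ⟪v, x⟫) '' K) := by
    intro v K hK
    refine ⟨-(‖v‖ * R), ?_⟩
    rintro y ⟨x, hx, rfl⟩
    have h1 := abs_real_inner_le_norm v x
    have h2 := hRnorm x (hK hx)
    have h3 : ‖v‖ * ‖x‖ ≤ ‖v‖ * R := mul_le_mul_of_nonneg_left h2 (norm_nonneg v)
    have h4 : |⟪v, x⟫| ≤ ‖v‖ * R := le_trans h1 h3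
    have h5 := neg_abs_le (⟪v, x⟫ : ℝ)
    show -(‖v‖ * R) ≤ ⟪v, x⟫
    linarith only [h4, h5]
  -- dirWidth basics
  have hw_nonneg : ∀ (v : EuclideanSpace ℝ (Fin 2)) (K : Set (EuclideanSpace ℝ (Fin 2))),
      K ⊆ Pb → K.Nonempty → 0 ≤ dirWidth v K := by
    intro v K hK hne
    obtain ⟨x, hx⟩ := hne
    have h1 := le_csSup (hbddA v K hK) (mem_image_of_mem (fun x => ⟪v, x⟫) hx)
    have h2 := csInf_le (hbddB v K hK) (mem_image_of_mem (fun x => ⟪v, x⟫) hx)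
    rw [hwdef]
    linarith only [h1, h2]
  have hw_mono : ∀ (v : EuclideanSpace ℝ (Fin 2)) (K₁ K₂ : Set (EuclideanSpace ℝ (Fin 2))),
      K₁ ⊆ K₂ → K₂ ⊆ Pb → K₁.Nonempty → dirWidth v K₁ ≤ dirWidth v K₂ := by
    intro v K₁ K₂ h12 h2P h1ne
    rw [hwdef, hwdef]
    have hs := csSup_le_csSup (hbddA v K₂ h2P) (h1ne.image _) (image_mono h12)
    have hi := csInf_le_csInf (hbddB v K₂ h2P) (h1ne.image _) (image_mono h12)
    linarith only [hs, hi]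
  have hw_neg : ∀ (v : EuclideanSpace ℝ (Fin 2)) (K : Set (EuclideanSpace ℝ (Fin 2))),
      K ⊆ Pb → K.Nonempty → dirWidth (-v) K = dirWidth v K := by
    intro v K hKP hKne
    have himg : (fun x => ⟪-v, x⟫) '' K = (fun y : ℝ => -y) '' ((fun x => ⟪v, x⟫) '' K) := by
      rw [← image_comp]
      congr 1
      funext x
      simp [inner_neg_left]
    rw [hwdef, hwdef, himg,
      RhoAux.sSup_neg_img _ (hKne.image _) (hbddB v K hKP),
      RhoAux.sInf_neg_img _ (hKne.image _) (hbddA v K hKP)]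
    ring
  -- setWidth basics
  have he₁ : ‖(EuclideanSpace.single 0 (1:ℝ) : EuclideanSpace ℝ (Fin 2))‖ = 1 := by
    rw [EuclideanSpace.norm_single]
    norm_num
  have hWne : ∀ K : Set (EuclideanSpace ℝ (Fin 2)),
      {w | ∃ v : EuclideanSpace ℝ (Fin 2), ‖v‖ = 1 ∧ w = dirWidth v K}.Nonempty :=
    fun K => ⟨_, EuclideanSpace.single 0 1, he₁, rfl⟩
  have hWbdd : ∀ K : Set (EuclideanSpace ℝ (Fin 2)), K ⊆ Pb → K.Nonempty →
      BddBelow {w | ∃ v : EuclideanSpace ℝ (Fin 2), ‖v‖ = 1 ∧ w = dirWidth v K} := by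
    intro K hKP hKne
    refine ⟨0, ?_⟩
    rintro w ⟨v, hv, rfl⟩
    exact hw_nonneg v K hKP hKne
  have hsw_le : ∀ (K : Set (EuclideanSpace ℝ (Fin 2))) (v : EuclideanSpace ℝ (Fin 2)),
      K ⊆ Pb → K.Nonempty → ‖v‖ = 1 → setWidth K ≤ dirWidth v K := by
    intro K v hKP hKne hv
    rw [hswdef]
    exact csInf_le (hWbdd K hKP hKne) ⟨v, hv, rfl⟩
  have hsw_mono : ∀ K₁ K₂ : Set (EuclideanSpace ℝ (Fin 2)),
      K₁ ⊆ K₂ → K₂ ⊆ Pb → K₁.Nonempty → setWidth K₁ ≤ setWidth K₂ := by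
    intro K₁ K₂ h12 h2P h1ne
    rw [hswdef K₂]
    apply le_csInf (hWne K₂)
    rintro w ⟨v, hv, rfl⟩
    exact le_trans (hsw_le K₁ v (h12.trans h2P) h1ne hv) (hw_mono v K₁ K₂ h12 h2P h1ne)
  -- rounded body facts
  have hrsubP : rounded Pb ρ ⊆ Pb := by
    rintro y ⟨x, hxball, hy⟩
    exact hxball hy
  have hrne : (rounded Pb ρ).Nonempty :=
    ⟨x₀, x₀, (hball ρ hρ₀.le x₀).mpr hx₀mem, mem_closedBall_self hρ₀.le⟩
  have hw_shift : ∀ v : EuclideanSpace ℝ (Fin 2), ‖v‖ = 1 →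
      dirWidth v (rounded Pb ρ) = dirWidth v (Q ρ) + 2 * ρ := by
    intro v hv
    have hsub := hQsubP ρ hρ₀.le
    have hsup : sSup ((fun x => ⟪v, x⟫) '' rounded Pb ρ)
        = sSup ((fun x => ⟪v, x⟫) '' Q ρ) + ρ := by
      apply le_antisymm
      · apply csSup_le (hrne.image _)
        rintro y ⟨z, ⟨x, hxball, hzx⟩, rfl⟩
        have hxQ : x ∈ Q ρ := (hball ρ hρ₀.le x).mp hxball
        have h1 : ⟪v, z⟫ = ⟪v, x⟫ + ⟪v, z - x⟫ := by
          rw [← inner_add_right]; congr 1; abel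
        have h2 : ⟪v, z - x⟫ ≤ ρ := by
          have h := real_inner_le_norm v (z - x)
          rw [hv, one_mul] at h
          have h' : ‖z - x‖ ≤ ρ := by rw [← dist_eq_norm]; exact mem_closedBall.mp hzx
          linarith
        have h3 := le_csSup (hbddA v (Q ρ) hsub) (mem_image_of_mem (fun x => ⟪v, x⟫) hxQ)
        show ⟪v, z⟫ ≤ _
        rw [h1]
        have h3' : ⟪v, x⟫ ≤ sSup ((fun x => ⟪v, x⟫) '' Q ρ) := h3
        linarith only [h2, h3']
      · have h4 : ∀ x ∈ Q ρ, ⟪v, x⟫ ≤ sSup ((fun x => ⟪v, x⟫) '' rounded Pb ρ) - ρ := by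
          intro x hx
          have hmem : x + ρ • v ∈ rounded Pb ρ := by
            refine ⟨x, (hball ρ hρ₀.le x).mpr hx, ?_⟩
            rw [mem_closedBall, dist_eq_norm]
            simp only [add_sub_cancel_left]
            rw [norm_smul, hv]
            simp [abs_of_nonneg hρ₀.le]
          have h5 := le_csSup (hbddA v _ hrsubP) (mem_image_of_mem (fun x => ⟪v, x⟫) hmem)
          have h5' : ⟪v, x + ρ • v⟫ ≤ sSup ((fun x => ⟪v, x⟫) '' rounded Pb ρ) := h5
          rw [inner_add_right, real_inner_smul_right, real_inner_self_eq_norm_mul_norm, hv] at h5'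
          linarith only [h5']
        have h6 : sSup ((fun x => ⟪v, x⟫) '' Q ρ)
            ≤ sSup ((fun x => ⟪v, x⟫) '' rounded Pb ρ) - ρ := by
          apply csSup_le (hQρne.image _)
          rintro y ⟨x, hx, rfl⟩
          exact h4 x hx
        linarith only [h6]
    have hinf : sInf ((fun x => ⟪v, x⟫) '' rounded Pb ρ)
        = sInf ((fun x => ⟪v, x⟫) '' Q ρ) - ρ := by
      apply le_antisymm
      · have h4 : ∀ x ∈ Q ρ, sInf ((fun x => ⟪v, x⟫) '' rounded Pb ρ) + ρ ≤ ⟪v, x⟫ := by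
          intro x hx
          have hmem : x - ρ • v ∈ rounded Pb ρ := by
            refine ⟨x, (hball ρ hρ₀.le x).mpr hx, ?_⟩
            rw [mem_closedBall, dist_eq_norm]
            have hsub2 : x - ρ • v - x = -(ρ • v) := by abel
            rw [hsub2, norm_neg, norm_smul, hv]
            simp [abs_of_nonneg hρ₀.le]
          have h5 := csInf_le (hbddB v _ hrsubP) (mem_image_of_mem (fun x => ⟪v, x⟫) hmem)
          have h5' : sInf ((fun x => ⟪v, x⟫) '' rounded Pb ρ) ≤ ⟪v, x - ρ • v⟫ := h5
          rw [inner_sub_right, real_inner_smul_right, real_inner_self_eq_norm_mul_norm, hv] at h5'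
          linarith only [h5']
        have h6 : sInf ((fun x => ⟪v, x⟫) '' rounded Pb ρ) + ρ
            ≤ sInf ((fun x => ⟪v, x⟫) '' Q ρ) := by
          apply le_csInf (hQρne.image _)
          rintro y ⟨x, hx, rfl⟩
          exact h4 x hx
        linarith only [h6]
      · apply le_csInf (hrne.image _)
        rintro y ⟨z, ⟨x, hxball, hzx⟩, rfl⟩
        have hxQ : x ∈ Q ρ := (hball ρ hρ₀.le x).mp hxball
        have h1 : ⟪v, z⟫ = ⟪v, x⟫ + ⟪v, z - x⟫ := by
          rw [← inner_add_right]; congr 1; abel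
        have h2 : |⟪v, z - x⟫| ≤ ρ := by
          have h := abs_real_inner_le_norm v (z - x)
          rw [hv, one_mul] at h
          have h' : ‖z - x‖ ≤ ρ := by rw [← dist_eq_norm]; exact mem_closedBall.mp hzx
          linarith
        have h3 := csInf_le (hbddB v (Q ρ) hsub) (mem_image_of_mem (fun x => ⟪v, x⟫) hxQ)
        have h3' : sInf ((fun x => ⟪v, x⟫) '' Q ρ) ≤ ⟪v, x⟫ := h3
        have h5 := neg_abs_le (⟪v, z - x⟫ : ℝ)
        show sInf ((fun x => ⟪v, x⟫) '' Q ρ) - ρ ≤ ⟪v, z⟫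
        rw [h1]
        linarith only [h2, h3', h5]
    rw [hwdef, hwdef, hsup, hinf]
    ring
  have hsw_shift : setWidth (rounded Pb ρ) = setWidth (Q ρ) + 2 * ρ := by
    have hsub := hQsubP ρ hρ₀.le
    apply le_antisymm
    · have h : setWidth (rounded Pb ρ) - 2 * ρ
          ≤ sInf {w | ∃ v : EuclideanSpace ℝ (Fin 2), ‖v‖ = 1 ∧ w = dirWidth v (Q ρ)} := by
        apply le_csInf (hWne (Q ρ))
        rintro w ⟨v, hv, rfl⟩
        have h2 := hsw_le (rounded Pb ρ) v hrsubP hrne hv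
        rw [hw_shift v hv] at h2
        linarith only [h2]
      rw [hswdef (Q ρ)]
      linarith only [h]
    · rw [hswdef (rounded Pb ρ)]
      apply le_csInf (hWne (rounded Pb ρ))
      rintro w ⟨v, hv, rfl⟩
      rw [hw_shift v hv]
      have h2 := hsw_le (Q ρ) v hsub hQρne hv
      linarith only [h2]
  have hswQρ : setWidth (Q ρ) = 2 * ((n:ℝ) - 1) * ρ := by
    have h := hρ
    rw [hsw_shift] at h
    linear_combination h
  have hn2 : (2:ℝ) ≤ (n:ℝ) := by exact_mod_cast hn
  have hswpos : 0 < setWidth (Q ρ) := by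
    rw [hswQρ]
    nlinarith only [hn2, hρ₀]
  -- continuity and attainment of the minimal width direction
  have hlip : ∀ v w : EuclideanSpace ℝ (Fin 2),
      dirWidth v (Q ρ) ≤ dirWidth w (Q ρ) + 2 * R * ‖v - w‖ := by
    intro v w
    have hsub := hQsubP ρ hρ₀.le
    have h1 : sSup ((fun x => ⟪v, x⟫) '' Q ρ)
        ≤ sSup ((fun x => ⟪w, x⟫) '' Q ρ) + R * ‖v - w‖ := by
      apply csSup_le (hQρne.image _)
      rintro y ⟨x, hx, rfl⟩
      have ha : ⟪v, x⟫ = ⟪w, x⟫ + ⟪v - w, x⟫ := by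
        rw [← inner_add_left]; congr 1; abel
      have hb := le_csSup (hbddA w _ hsub) (mem_image_of_mem (fun x => ⟪w, x⟫) hx)
      have hb' : ⟪w, x⟫ ≤ sSup ((fun x => ⟪w, x⟫) '' Q ρ) := hb
      have hc : ⟪v - w, x⟫ ≤ R * ‖v - w‖ := by
        have h := real_inner_le_norm (v - w) x
        have h2 := hRnorm x (hsub hx)
        nlinarith only [h, h2, norm_nonneg (v - w)]
      show ⟪v, x⟫ ≤ _
      rw [ha]; linarith only [hb', hc]
    have h2 : sInf ((fun x => ⟪w, x⟫) '' Q ρ) - R * ‖v - w‖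
        ≤ sInf ((fun x => ⟪v, x⟫) '' Q ρ) := by
      apply le_csInf (hQρne.image _)
      rintro y ⟨x, hx, rfl⟩
      have ha : ⟪v, x⟫ = ⟪w, x⟫ + ⟪v - w, x⟫ := by
        rw [← inner_add_left]; congr 1; abel
      have hb := csInf_le (hbddB w _ hsub) (mem_image_of_mem (fun x => ⟪w, x⟫) hx)
      have hb' : sInf ((fun x => ⟪w, x⟫) '' Q ρ) ≤ ⟪w, x⟫ := hb
      have hc : -(R * ‖v - w‖) ≤ ⟪v - w, x⟫ := by
        have h := abs_real_inner_le_norm (v - w) x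
        have h2 := hRnorm x (hsub hx)
        have h3 : |⟪v - w, x⟫| ≤ R * ‖v - w‖ := by
          nlinarith only [h, h2, norm_nonneg (v - w)]
        linarith only [h3, neg_abs_le (⟪v - w, x⟫ : ℝ)]
      show _ ≤ ⟪v, x⟫
      rw [ha]; linarith only [hb', hc]
    rw [hwdef, hwdef]
    linarith only [h1, h2]
  have hcont : Continuous (fun v => dirWidth v (Q ρ)) := by
    have hlw : LipschitzWith (Real.toNNReal (2 * R)) (fun v => dirWidth v (Q ρ)) := by
      apply LipschitzWith.of_dist_le_mul
      intro v w
      rw [Real.dist_eq, Real.coe_toNNReal _ (by linarith only [hR0'] : (0:ℝ) ≤ 2 * R),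
        dist_eq_norm]
      rw [abs_sub_le_iff]
      constructor
      · linarith only [hlip v w]
      · have h := hlip w v
        rw [norm_sub_rev w v] at h
        linarith only [h]
    exact hlw.continuous
  have hsphne : (sphere (0 : EuclideanSpace ℝ (Fin 2)) 1).Nonempty := by
    refine ⟨EuclideanSpace.single 0 1, ?_⟩
    simp only [mem_sphere, dist_zero_right]
    exact he₁
  obtain ⟨vs, hvs_sph, hvs_min⟩ :=
    (isCompact_sphere (0 : EuclideanSpace ℝ (Fin 2)) 1).exists_isMinOn hsphne
      hcont.continuousOn
  have hvs : ‖vs‖ = 1 := by simpa [mem_sphere, dist_zero_right] using hvs_sph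
  have hswQval : setWidth (Q ρ) = dirWidth vs (Q ρ) := by
    rw [hswdef]
    apply IsLeast.csInf_eq
    constructor
    · exact ⟨vs, hvs, rfl⟩
    · rintro w ⟨v, hv, rfl⟩
      exact hvs_min (by simpa [mem_sphere, dist_zero_right] using hv)
  -- maximizer and minimizer in direction vs
  have hcont2 : ∀ u : EuclideanSpace ℝ (Fin 2), ContinuousOn (fun x => ⟪u, x⟫) (Q ρ) :=
    fun u => (Continuous.inner continuous_const continuous_id).continuousOn
  obtain ⟨p, hpQ, hpmax'⟩ := hQcpt.exists_isMaxOn hQρne (hcont2 vs)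
  obtain ⟨q, hqQ, hqmin'⟩ := hQcpt.exists_isMinOn hQρne (hcont2 vs)
  have hpmax : ∀ x ∈ Q ρ, ⟪vs, x⟫ ≤ ⟪vs, p⟫ := fun x hx => hpmax' hx
  have hqmin : ∀ x ∈ Q ρ, ⟪vs, q⟫ ≤ ⟪vs, x⟫ := fun x hx => hqmin' hx
  have hdw_eq : ∀ (uu z₁ z₂ : EuclideanSpace ℝ (Fin 2)), z₁ ∈ Q ρ → z₂ ∈ Q ρ →
      (∀ x ∈ Q ρ, ⟪uu, x⟫ ≤ ⟪uu, z₁⟫) → (∀ x ∈ Q ρ, ⟪uu, z₂⟫ ≤ ⟪uu, x⟫) →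
      dirWidth uu (Q ρ) = ⟪uu, z₁⟫ - ⟪uu, z₂⟫ := by
    intro uu z₁ z₂ h₁ h₂ hmax hmin
    rw [hwdef]
    have hs : sSup ((fun x => ⟪uu, x⟫) '' Q ρ) = ⟪uu, z₁⟫ := by
      apply IsGreatest.csSup_eq
      constructor
      · exact mem_image_of_mem _ h₁
      · rintro y ⟨x, hx, rfl⟩
        exact hmax x hx
    have hi : sInf ((fun x => ⟪uu, x⟫) '' Q ρ) = ⟪uu, z₂⟫ := by
      apply IsLeast.csInf_eq
      constructor
      · exact mem_image_of_mem _ h₂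
      · rintro y ⟨x, hx, rfl⟩
        exact hmin x hx
    rw [hs, hi]
  -- the key claim: some A i attains the minimal width
  have hfound : ∃ i, dirWidth (A i) (Q ρ) = setWidth (Q ρ) := by
    by_cases hup : ∀ x ∈ Q ρ, ⟪vs, x⟫ = ⟪vs, p⟫ → x = p
    · by_cases huq : ∀ x ∈ Q ρ, ⟪vs, x⟫ = ⟪vs, q⟫ → x = q
      · -- both support points unique: contradiction via rotation
        exfalso
        obtain ⟨δ₁, hδ₁, hstab₁⟩ := RhoAux.max_stable A (fun j => b j - ρ) hA hpQ hpmax hup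
        have hqmax : ∀ x ∈ Q ρ, ⟪-vs, x⟫ ≤ ⟪-vs, q⟫ := by
          intro x hx
          rw [inner_neg_left, inner_neg_left]
          exact neg_le_neg (hqmin x hx)
        have hquniq : ∀ x ∈ Q ρ, ⟪-vs, x⟫ = ⟪-vs, q⟫ → x = q := by
          intro x hx h
          apply huq x hx
          rw [inner_neg_left, inner_neg_left] at h
          linarith only [h]
        obtain ⟨δ₂, hδ₂, hstab₂⟩ := RhoAux.max_stable A (fun j => b j - ρ) hA hqQ hqmax hquniq
        set δ : ℝ := min δ₁ δ₂ with hδdef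
        have hδpos : 0 < δ := lt_min hδ₁ hδ₂
        set u : EuclideanSpace ℝ (Fin 2) :=
          (WithLp.equiv 2 (Fin 2 → ℝ)).symm ![-(vs 1), vs 0] with hu
        have hu0 : u 0 = -(vs 1) := by
          rw [hu, WithLp.equiv_symm_apply]
          simp
        have hu1 : u 1 = vs 0 := by
          rw [hu, WithLp.equiv_symm_apply]
          simp
        have hvs2 : vs 0 ^ 2 + vs 1 ^ 2 = 1 := by
          have h := real_inner_self_eq_norm_mul_norm vs
          rw [hvs, RhoAux.inner_coords] at h
          linear_combination h
        have huvs : ⟪vs, u⟫ = 0 := by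
          rw [RhoAux.inner_coords, hu0, hu1]
          ring
        have hunorm : ‖u‖ = 1 := by
          have h := real_inner_self_eq_norm_mul_norm u
          rw [RhoAux.inner_coords, hu0, hu1] at h
          have h2 : ‖u‖ * ‖u‖ = 1 := by linear_combination hvs2 - h
          exact RhoAux.eq_one_of_mul_self (norm_nonneg u) h2
        set θ : ℝ := min (δ / 2) 1 with hθdef
        have hθpos : 0 < θ := lt_min (by linarith only [hδpos]) one_pos
        have hθ1 : θ ≤ 1 := min_le_right _ _
        have hθδ : θ ≤ δ / 2 := min_le_left _ _
        set ct : ℝ := Real.cos θ with hctdef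
        set st : ℝ := Real.sin θ with hstdef
        have hst0 : 0 ≤ st := Real.sin_nonneg_of_nonneg_of_le_pi hθpos.le
          (by linarith only [Real.pi_gt_three, hθ1])
        have hct1 : ct < 1 := by
          have h := Real.cos_lt_cos_of_nonneg_of_le_pi (le_refl 0)
            (by linarith only [Real.pi_gt_three, hθ1]) hθpos
          rw [Real.cos_zero] at h
          exact h
        have hpyth : st ^ 2 + ct ^ 2 = 1 := Real.sin_sq_add_cos_sq θ
        have hct_le : ct ≤ 1 := Real.cos_le_one θ
        have h1ct : 1 - ct ≤ θ ^ 2 / 2 := by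
          have h := Real.one_sub_sq_div_two_le_cos (x := θ)
          linarith only [h]
        have hstθ : st ≤ θ := Real.sin_le hθpos.le
        have hvv : ⟪vs, vs⟫ = 1 := by
          rw [real_inner_self_eq_norm_mul_norm, hvs]; norm_num
        have huu : ⟪u, u⟫ = 1 := by
          rw [real_inner_self_eq_norm_mul_norm, hunorm]; norm_num
        have huvs' : ⟪u, vs⟫ = 0 := by
          rw [real_inner_comm]; exact huvs
        -- two rotated unit vectors
        have hkey : ∀ sg : ℝ, sg = 1 ∨ sg = -1 →
            setWidth (Q ρ) ≤ ct * setWidth (Q ρ) + (sg * st) * (⟪u, p⟫ - ⟪u, q⟫) := by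
          intro sg hsg
          set vθ : EuclideanSpace ℝ (Fin 2) := ct • vs + (sg * st) • u with hvθ
          have hsg2 : sg * sg = 1 := by rcases hsg with h | h <;> rw [h] <;> norm_num
          have hinner_vθ : ∀ x : EuclideanSpace ℝ (Fin 2),
              ⟪vθ, x⟫ = ct * ⟪vs, x⟫ + (sg * st) * ⟪u, x⟫ := by
            intro x
            rw [hvθ, inner_add_left, real_inner_smul_left, real_inner_smul_left]
          have hvθnorm : ‖vθ‖ = 1 := by
            have h : ⟪vθ, vθ⟫ = 1 := by
              rw [hinner_vθ, hvθ, inner_add_right, inner_add_right,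
                real_inner_smul_right, real_inner_smul_right,
                real_inner_smul_right, real_inner_smul_right,
                hvv, huu, huvs, huvs']
              linear_combination st ^ 2 * hsg2 + hpyth
            have h2 := real_inner_self_eq_norm_mul_norm vθ
            rw [h] at h2
            exact RhoAux.eq_one_of_mul_self (norm_nonneg vθ) h2.symm
          have hvθsub : vθ - vs = (ct - 1) • vs + (sg * st) • u := by
            rw [hvθ, sub_smul, one_smul]
            abel
          have hvθdist : ‖vθ - vs‖ ≤ δ := by
            rw [hvθsub]
            have h := norm_add_le ((ct - 1) • vs) ((sg * st) • u)
            rw [norm_smul, norm_smul, hvs, hunorm, mul_one, mul_one,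
              Real.norm_eq_abs, Real.norm_eq_abs] at h
            have h2 : |ct - 1| = 1 - ct := by
              rw [abs_of_nonpos (by linarith)]; ring
            have h3 : |sg * st| = st := by
              rw [abs_mul]
              rcases hsg with hh | hh <;> rw [hh] <;>
                simp [abs_of_nonneg hst0]
            rw [h2, h3] at h
            have hsq : θ ^ 2 ≤ θ := by nlinarith only [hθpos, hθ1]
            linarith only [h, h1ct, hstθ, hsq, hθδ, hδpos]
          have hp₁ : ∀ x ∈ Q ρ, ⟪vθ, x⟫ ≤ ⟪vθ, p⟫ :=
            fun x hx => hstab₁ vθ (le_trans hvθdist (min_le_left _ _)) x hx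
          have hq₁ : ∀ x ∈ Q ρ, ⟪vθ, q⟫ ≤ ⟪vθ, x⟫ := by
            intro x hx
            have hneg : ‖-vθ - -vs‖ ≤ δ₂ := by
              have hne : -vθ - -vs = -(vθ - vs) := by abel
              rw [hne, norm_neg]
              exact le_trans hvθdist (min_le_right _ _)
            have h := hstab₂ (-vθ) hneg x hx
            rw [inner_neg_left, inner_neg_left] at h
            linarith only [h]
          have hwvθ : dirWidth vθ (Q ρ) = ⟪vθ, p⟫ - ⟪vθ, q⟫ := hdw_eq vθ p q hpQ hqQ hp₁ hq₁
          have hge : setWidth (Q ρ) ≤ dirWidth vθ (Q ρ) :=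
            hsw_le (Q ρ) vθ (hQsubP ρ hρ₀.le) hQρne hvθnorm
          have hWpq : ⟪vs, p⟫ - ⟪vs, q⟫ = setWidth (Q ρ) := by
            rw [hswQval, hdw_eq vs p q hpQ hqQ hpmax hqmin]
          rw [hwvθ, hinner_vθ p, hinner_vθ q] at hge
          have hx2 : ct * ⟪vs, p⟫ + (sg * st) * ⟪u, p⟫ - (ct * ⟪vs, q⟫ + (sg * st) * ⟪u, q⟫)
              = ct * (⟪vs, p⟫ - ⟪vs, q⟫) + (sg * st) * (⟪u, p⟫ - ⟪u, q⟫) := by ring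
          rw [hx2, hWpq] at hge
          exact hge
        have hk1 := hkey 1 (Or.inl rfl)
        have hk2 := hkey (-1) (Or.inr rfl)
        nlinarith only [hk1, hk2, hswpos, hct1]
      · -- minimizer not unique
        push_neg at huq
        obtain ⟨x, hxQ, hxval, hxne⟩ := huq
        set z : EuclideanSpace ℝ (Fin 2) := (2⁻¹ : ℝ) • (x + q) with hz
        have hzQ : z ∈ Q ρ := by
          intro j
          have h1 : ⟪A j, x⟫ ≤ b j - ρ := hxQ j
          have h2 : ⟪A j, q⟫ ≤ b j - ρ := hqQ j
          show ⟪A j, z⟫ ≤ b j - ρ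
          rw [hz, real_inner_smul_right, inner_add_right]
          linarith only [h1, h2]
        have hzmax : ∀ y ∈ Q ρ, ⟪-vs, y⟫ ≤ ⟪-vs, z⟫ := by
          intro y hy
          have h1 : ⟪vs, z⟫ = ⟪vs, q⟫ := by
            rw [hz, real_inner_smul_right, inner_add_right, hxval]; ring
          rw [inner_neg_left, inner_neg_left, h1]
          exact neg_le_neg (hqmin y hy)
        have hvsneg : ‖-vs‖ = 1 := by rw [norm_neg]; exact hvs
        obtain ⟨j, hj⟩ := RhoAux.active_of_max A (fun j => b j - ρ) hA hvsneg hzQ hzmax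
        have hj' : ⟪A j, z⟫ = b j - ρ := hj
        have h3 : ⟪A j, z⟫ = 2⁻¹ * (⟪A j, x⟫ + ⟪A j, q⟫) := by
          rw [hz, real_inner_smul_right, inner_add_right]
        have h1 : ⟪A j, x⟫ ≤ b j - ρ := hxQ j
        have h2 : ⟪A j, q⟫ ≤ b j - ρ := hqQ j
        rw [h3] at hj'
        have hjx : ⟪A j, x⟫ = b j - ρ := by linarith only [hj', h1, h2]
        have hjq : ⟪A j, q⟫ = b j - ρ := by linarith only [hj', h1, h2]
        have hdne : x - q ≠ 0 := sub_ne_zero.mpr hxne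
        have hAjd : ⟪A j, x - q⟫ = 0 := by rw [inner_sub_right, hjx, hjq]; ring
        have hvsd : ⟪vs, x - q⟫ = 0 := by rw [inner_sub_right, hxval]; ring
        rcases RhoAux.eq_or_neg_of_orthogonal (hA j) hvs hdne hAjd hvsd with h | h
        · exact ⟨j, by rw [h, ← hswQval]⟩
        · refine ⟨j, ?_⟩
          rw [h, hw_neg vs (Q ρ) (hQsubP ρ hρ₀.le) hQρne, ← hswQval]
    · -- maximizer not unique
      push_neg at hup
      obtain ⟨x, hxQ, hxval, hxne⟩ := hup
      set z : EuclideanSpace ℝ (Fin 2) := (2⁻¹ : ℝ) • (x + p) with hz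
      have hzQ : z ∈ Q ρ := by
        intro j
        have h1 : ⟪A j, x⟫ ≤ b j - ρ := hxQ j
        have h2 : ⟪A j, p⟫ ≤ b j - ρ := hpQ j
        show ⟪A j, z⟫ ≤ b j - ρ
        rw [hz, real_inner_smul_right, inner_add_right]
        linarith only [h1, h2]
      have hzmax : ∀ y ∈ Q ρ, ⟪vs, y⟫ ≤ ⟪vs, z⟫ := by
        intro y hy
        have h1 : ⟪vs, z⟫ = ⟪vs, p⟫ := by
          rw [hz, real_inner_smul_right, inner_add_right, hxval]; ring
        rw [h1]
        exact hpmax y hy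
      obtain ⟨j, hj⟩ := RhoAux.active_of_max A (fun j => b j - ρ) hA hvs hzQ hzmax
      have hj' : ⟪A j, z⟫ = b j - ρ := hj
      have h3 : ⟪A j, z⟫ = 2⁻¹ * (⟪A j, x⟫ + ⟪A j, p⟫) := by
        rw [hz, real_inner_smul_right, inner_add_right]
      have h1 : ⟪A j, x⟫ ≤ b j - ρ := hxQ j
      have h2 : ⟪A j, p⟫ ≤ b j - ρ := hpQ j
      rw [h3] at hj'
      have hjx : ⟪A j, x⟫ = b j - ρ := by linarith only [hj', h1, h2]
      have hjp : ⟪A j, p⟫ = b j - ρ := by linarith only [hj', h1, h2]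
      have hdne : x - p ≠ 0 := sub_ne_zero.mpr hxne
      have hAjd : ⟪A j, x - p⟫ = 0 := by rw [inner_sub_right, hjx, hjp]; ring
      have hvsd : ⟪vs, x - p⟫ = 0 := by rw [inner_sub_right, hxval]; ring
      rcases RhoAux.eq_or_neg_of_orthogonal (hA j) hvs hdne hAjd hvsd with h | h
      · exact ⟨j, by rw [h, ← hswQval]⟩
      · refine ⟨j, ?_⟩
        rw [h, hw_neg vs (Q ρ) (hQsubP ρ hρ₀.le) hQρne, ← hswQval]
  -- final assembly
  constructor
  · refine ⟨hρ₀, hρr, ?_⟩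
    obtain ⟨i, hi⟩ := hfound
    refine ⟨i, ?_⟩
    rw [hIP ρ hρ₀.le, hi, hswQρ]
    ring
  · rintro t ⟨ht0, htr, i, hf⟩
    by_contra hlt
    push_neg at hlt
    rw [hIP t ht0.le] at hf
    have hQρsubt : Q ρ ⊆ Q t := hQmono t ρ hlt.le
    have hQtne : (Q t).Nonempty := hQρne.mono hQρsubt
    have h1 : dirWidth (A i) (Q t) = 2 * ((n:ℝ) - 1) * t := by linarith only [hf]
    have h2 : setWidth (Q t) ≤ dirWidth (A i) (Q t) :=
      hsw_le (Q t) (A i) (hQsubP t ht0.le) hQtne (hA i)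
    have h3 : setWidth (Q ρ) ≤ setWidth (Q t) :=
      hsw_mono (Q ρ) (Q t) hQρsubt (hQsubP t ht0.le) hQρne
    rw [hswQρ] at h3
    nlinarith only [h1, h2, h3, hlt, hn2]
end
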